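/- Let D be a probability distribution on X × Y, let H be a nonempty class of measurable hypotheses X → Z, let g_1, …, g_k be pairwise disjoint measurable groups with P[x ∈ g_i] > 0 for each i, and let f : X → Z be measurable. Suppose that for each i there is ε_i ≥ 0 with L_D(f | g_i) ≤ inf_{h ∈ H} L_D(h | g_i) + ε_i. Then L_D(f | ∪_{i=1}^k g_i) ≤ inf_{h ∈ H} L_D(h | ∪_{i=1}^k g_i) + Σ_{i=1}^k ( P[x ∈ g_i] / Σ_{j=1}^k P[x ∈ g_j] ) · ε_i. -/

import Mathlib

open MeasureTheory ProbabilityTheory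

/-- Group-conditional (population) risk `L_D(f | g)`. -/
noncomputable def condRisk {X Y Z : Type*} [MeasurableSpace X] [MeasurableSpace Y]
    (D : Measure (X × Y)) (ℓ : Z → Y → ℝ) (f : X → Z) (g : Set X) : ℝ :=
  ∫ p, ℓ (f p.1) p.2 ∂(D[|{p : X × Y | p.1 ∈ g}])

/-- group-wise excess error bounds on disjoint groups combine into an
excess error bound on their union, with probability-proportional weights. -/
theorem excess_error_union {X Y Z : Type*}
    [MeasurableSpace X] [MeasurableSpace Y] [MeasurableSpace Z]
    (D : Measure (X × Y)) [IsProbabilityMeasure D]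
    (ℓ : Z → Y → ℝ) (hℓ : ∀ z y, ℓ z y ∈ Set.Icc (0 : ℝ) 1)
    (hℓm : Measurable (Function.uncurry ℓ))
    (H : Set (X → Z)) (hH : H.Nonempty) (hHm : ∀ h ∈ H, Measurable h)
    {k : ℕ} (hk : 0 < k)
    (g : Fin k → Set X) (hgm : ∀ i, MeasurableSet (g i))
    (hdisj : ∀ i j, i ≠ j → g i ∩ g j = ∅)
    (hpos : ∀ i, 0 < D {p : X × Y | p.1 ∈ g i})
    (f : X → Z) (hf : Measurable f)
    (ε : Fin k → ℝ) (hε : ∀ i, 0 ≤ ε i)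
    (hbound : ∀ i, condRisk D ℓ f (g i) ≤
      (⨅ h : H, condRisk D ℓ (h : X → Z) (g i)) + ε i) :
    condRisk D ℓ f (⋃ i, g i) ≤
      (⨅ h : H, condRisk D ℓ (h : X → Z) (⋃ i, g i)) +
        ∑ i, ((D {p : X × Y | p.1 ∈ g i}).toReal /
            (∑ j, (D {p : X × Y | p.1 ∈ g j}).toReal)) * ε i := by
  classical
  set S : Fin k → Set (X × Y) := fun i => {p | p.1 ∈ g i} with hS
  have hSm : ∀ i, MeasurableSet (S i) := fun i => (hgm i).preimage measurable_fst
  have hSd : Pairwise (Function.onFun Disjoint S) := by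
    intro i j hij
    refine Set.disjoint_left.2 fun p hpi hpj => ?_
    have h1 : p.1 ∈ g i ∩ g j := ⟨hpi, hpj⟩
    rw [hdisj i j hij] at h1
    exact h1
  set w : Fin k → ℝ := fun i => (D (S i)).toReal with hw
  set W : ℝ := ∑ j, w j with hWdef
  have hwpos : ∀ i, 0 < w i := fun i =>
    ENNReal.toReal_pos (hpos i).ne' (measure_ne_top D _)
  have hWpos : 0 < W := Finset.sum_pos (fun i _ => hwpos i) ⟨⟨0, hk⟩, Finset.mem_univ _⟩
  have hU : {p : X × Y | p.1 ∈ ⋃ i, g i} = ⋃ i, S i := by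
    ext p; simp [S]
  have hDU : (D (⋃ i, S i)).toReal = W := by
    rw [measure_iUnion hSd hSm, tsum_fintype, ENNReal.toReal_sum]
    exact fun i _ => measure_ne_top D _
  -- key decomposition
  have key : ∀ f0 : X → Z, Measurable f0 →
      condRisk D ℓ f0 (⋃ i, g i) = ∑ i, (w i / W) * condRisk D ℓ f0 (g i) := by
    intro f0 hf0
    set φ : X × Y → ℝ := fun p => ℓ (f0 p.1) p.2 with hφ
    have hφm : Measurable φ := hℓm.comp ((hf0.comp measurable_fst).prodMk measurable_snd)
    have hint : Integrable φ D := by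
      refine (integrable_const (1 : ℝ)).mono' hφm.aestronglyMeasurable (ae_of_all _ fun p => ?_)
      rw [Real.norm_eq_abs, abs_of_nonneg (hℓ _ _).1]
      exact (hℓ _ _).2
    have hsplit : ∫ p in ⋃ i, S i, φ p ∂D = ∑ i, ∫ p in S i, φ p ∂D := by
      rw [integral_iUnion hSm hSd hint.integrableOn, tsum_fintype]
    have hCR : ∀ g' : Set X, condRisk D ℓ f0 g' =
        (D {p : X × Y | p.1 ∈ g'}).toReal⁻¹ * ∫ p in {p : X × Y | p.1 ∈ g'}, φ p ∂D := by
      intro g'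
      rw [condRisk, ProbabilityTheory.cond, integral_smul_measure, ENNReal.toReal_inv,
        smul_eq_mul]
    rw [hCR, hU, hsplit, hDU, Finset.mul_sum]
    refine Finset.sum_congr rfl fun i _ => ?_
    rw [hCR]
    have : {p : X × Y | p.1 ∈ g i} = S i := rfl
    rw [this]
    have h1 : w i ≠ 0 := (hwpos i).ne'
    have h2 : W ≠ 0 := hWpos.ne'
    field_simp
    rw [mul_div_assoc, show w i / (D (S i)).toReal = 1 from div_self h1, mul_one]
  -- nonnegativity and bddBelow
  have hCRnn : ∀ (f0 : X → Z) (g' : Set X), 0 ≤ condRisk D ℓ f0 g' := fun f0 g' =>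
    integral_nonneg fun p => (hℓ _ _).1
  have hbdd : ∀ g' : Set X, BddBelow (Set.range fun h : H => condRisk D ℓ (h : X → Z) g') := by
    intro g'
    exact ⟨0, fun x ⟨h, hh⟩ => hh ▸ hCRnn _ _⟩
  have hHne : Nonempty H := hH.to_subtype
  -- lower bound on inf over union
  have hinfle : ∑ i, (w i / W) * (⨅ h : H, condRisk D ℓ (h : X → Z) (g i)) ≤
      ⨅ h : H, condRisk D ℓ (h : X → Z) (⋃ i, g i) := by
    refine le_ciInf fun h => ?_
    rw [key h (hHm h h.2)]
    refine Finset.sum_le_sum fun i _ => ?_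
    refine mul_le_mul_of_nonneg_left ?_ (div_nonneg (hwpos i).le hWpos.le)
    exact ciInf_le (hbdd (g i)) h
  calc condRisk D ℓ f (⋃ i, g i) = ∑ i, (w i / W) * condRisk D ℓ f (g i) := key f hf
    _ ≤ ∑ i, (w i / W) * ((⨅ h : H, condRisk D ℓ (h : X → Z) (g i)) + ε i) := by
        refine Finset.sum_le_sum fun i _ => ?_
        exact mul_le_mul_of_nonneg_left (hbound i) (div_nonneg (hwpos i).le hWpos.le)
    _ = ∑ i, (w i / W) * (⨅ h : H, condRisk D ℓ (h : X → Z) (g i)) +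
        ∑ i, (w i / W) * ε i := by
        rw [← Finset.sum_add_distrib]; exact Finset.sum_congr rfl fun i _ => by ring
    _ ≤ (⨅ h : H, condRisk D ℓ (h : X → Z) (⋃ i, g i)) + ∑ i, (w i / W) * ε i :=
        add_le_add_left hinfle _
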